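/- For real q with 0 < q < 1 set p = 1-q, Q = 1/q, L = log Q, and define A(q) = -(p/(qL))·Σ_{l≥1} 1/(Q^l - 1) + (p/q)·Σ_{l≥1} l·Q^l/(Q^l - 1)² + 1/L - 1/p - q/p. Then lim_{q→1⁻} A(q) = 1/4. -/

import Mathlib

open Filter Real Set

noncomputable def hh (x : ℝ) : ℝ := x / (Real.exp x - 1)
noncomputable def gg (x : ℝ) : ℝ :=
  x * Real.exp x / (Real.exp x - 1) ^ 2 - 1 / (Real.exp x - 1)
noncomputable def gg1 (x : ℝ) : ℝ :=
  Real.exp x * (2 * (Real.exp x - 1) - x * (Real.exp x + 1)) / (Real.exp x - 1) ^ 3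
noncomputable def gg2 (x : ℝ) : ℝ :=
  Real.exp x * (x * (Real.exp x ^ 2 + 4 * Real.exp x + 1) - 3 * (Real.exp x ^ 2 - 1))
    / (Real.exp x - 1) ^ 4

lemma expD_pos {x : ℝ} (hx : 0 < x) : 0 < Real.exp x - 1 := by
  have : (1:ℝ) < Real.exp x := by
    calc (1:ℝ) = Real.exp 0 := (Real.exp_zero).symm
    _ < Real.exp x := Real.exp_lt_exp.2 hx
  linarith

/-- generic: f 0 = 0, f' ≥ 0 on [0,∞) ⇒ f ≥ 0 on [0,∞) -/
lemma nonneg_of_deriv {f f' : ℝ → ℝ} (hd : ∀ x, HasDerivAt f (f' x) x)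
    (h0 : f 0 = 0) (hn : ∀ x, 0 ≤ x → 0 ≤ f' x) : ∀ x, 0 ≤ x → 0 ≤ f x := by
  intro x hx
  have hmono : MonotoneOn f (Set.Ici (0:ℝ)) := by
    apply monotoneOn_of_deriv_nonneg (convex_Ici 0)
    · exact fun y _ => ((hd y).continuousAt).continuousWithinAt
    · exact fun y _ => ((hd y).differentiableAt).differentiableWithinAt
    · intro y hy
      rw [(hd y).deriv]
      exact hn y (le_of_lt (by simpa using hy))
  have := hmono (self_mem_Ici) hx hx
  simpa [h0] using this

lemma ineq1 : ∀ x : ℝ, 0 ≤ x → 0 ≤ x * Real.exp x - Real.exp x + 1 := by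
  apply nonneg_of_deriv (f' := fun x => x * Real.exp x)
  · intro x
    have h1 : HasDerivAt (fun x : ℝ => x * Real.exp x) (1 * Real.exp x + x * Real.exp x) x :=
      (hasDerivAt_id x).mul (Real.hasDerivAt_exp x)
    have h2 : HasDerivAt (fun x : ℝ => x * Real.exp x - Real.exp x + 1)
        (1 * Real.exp x + x * Real.exp x - Real.exp x) x :=
      ((h1.sub (Real.hasDerivAt_exp x)).add_const 1)
    convert h2 using 1; ring
  · norm_num
  · intro x hx; positivity

lemma ineq2 : ∀ x : ℝ, 0 ≤ x → 0 ≤ x * (Real.exp x + 1) - 2 * (Real.exp x - 1) := by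
  apply nonneg_of_deriv (f' := fun x => x * Real.exp x - Real.exp x + 1)
  · intro x
    have h1 : HasDerivAt (fun x : ℝ => x * (Real.exp x + 1))
        (1 * (Real.exp x + 1) + x * Real.exp x) x :=
      (hasDerivAt_id x).mul ((Real.hasDerivAt_exp x).add_const 1)
    have h2 : HasDerivAt (fun x : ℝ => 2 * (Real.exp x - 1)) (2 * Real.exp x) x :=
      ((Real.hasDerivAt_exp x).sub_const 1).const_mul 2
    exact (h1.sub h2).congr_deriv (by ring)
  · norm_num
  · exact ineq1

lemma ineq3 : ∀ x : ℝ, 0 ≤ x →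
    0 ≤ (Real.exp x ^ 2 + 4 * Real.exp x + 1) + x * (2 * Real.exp x ^ 2 + 4 * Real.exp x)
      - 6 * Real.exp x ^ 2 := by
  apply nonneg_of_deriv
    (f' := fun x => 4 * Real.exp x * (x * (Real.exp x + 1) - 2 * (Real.exp x - 1)))
  · intro x
    have hE := Real.hasDerivAt_exp x
    have hE2 : HasDerivAt (fun x : ℝ => Real.exp x ^ 2) (2 * Real.exp x ^ 1 * Real.exp x) x :=
      hE.pow 2
    have h1 : HasDerivAt (fun x : ℝ => Real.exp x ^ 2 + 4 * Real.exp x + 1)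
        (2 * Real.exp x ^ 1 * Real.exp x + 4 * Real.exp x) x :=
      ((hE2.add (hE.const_mul 4)).add_const 1)
    have h2 : HasDerivAt (fun x : ℝ => x * (2 * Real.exp x ^ 2 + 4 * Real.exp x))
        (1 * (2 * Real.exp x ^ 2 + 4 * Real.exp x)
          + x * (2 * (2 * Real.exp x ^ 1 * Real.exp x) + 4 * Real.exp x)) x :=
      (hasDerivAt_id x).mul ((hE2.const_mul 2).add (hE.const_mul 4))
    have h3 : HasDerivAt (fun x : ℝ => 6 * Real.exp x ^ 2)
        (6 * (2 * Real.exp x ^ 1 * Real.exp x)) x := hE2.const_mul 6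
    exact ((h1.add h2).sub h3).congr_deriv (by ring)
  · norm_num
  · intro x hx
    have := ineq2 x hx
    have hE : (0:ℝ) < Real.exp x := Real.exp_pos x
    positivity

lemma ineq4 : ∀ x : ℝ, 0 ≤ x →
    0 ≤ x * (Real.exp x ^ 2 + 4 * Real.exp x + 1) - 3 * (Real.exp x ^ 2 - 1) := by
  apply nonneg_of_deriv
    (f' := fun x => (Real.exp x ^ 2 + 4 * Real.exp x + 1)
      + x * (2 * Real.exp x ^ 2 + 4 * Real.exp x) - 6 * Real.exp x ^ 2)
  · intro x
    have hE := Real.hasDerivAt_exp x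
    have hE2 : HasDerivAt (fun x : ℝ => Real.exp x ^ 2) (2 * Real.exp x ^ 1 * Real.exp x) x :=
      hE.pow 2
    have h1 : HasDerivAt (fun x : ℝ => x * (Real.exp x ^ 2 + 4 * Real.exp x + 1))
        (1 * (Real.exp x ^ 2 + 4 * Real.exp x + 1)
          + x * (2 * Real.exp x ^ 1 * Real.exp x + 4 * Real.exp x)) x :=
      (hasDerivAt_id x).mul (((hE2.add (hE.const_mul 4)).add_const 1))
    have h3 : HasDerivAt (fun x : ℝ => 3 * (Real.exp x ^ 2 - 1))
        (3 * (2 * Real.exp x ^ 1 * Real.exp x)) x := (hE2.sub_const 1).const_mul 3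
    exact (h1.sub h3).congr_deriv (by ring)
  · norm_num
  · exact ineq3

lemma hh_hasDeriv {x : ℝ} (hx : 0 < x) : HasDerivAt hh (-(gg x)) x := by
  have hD := expD_pos hx
  have hE := Real.hasDerivAt_exp x
  have h : HasDerivAt (fun x : ℝ => x / (Real.exp x - 1))
      ((1 * (Real.exp x - 1) - x * Real.exp x) / (Real.exp x - 1) ^ 2) x :=
    (hasDerivAt_id x).div (hE.sub_const 1) (ne_of_gt hD)
  have : HasDerivAt hh ((1 * (Real.exp x - 1) - x * Real.exp x) / (Real.exp x - 1) ^ 2) x := h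
  convert this using 1
  unfold gg
  field_simp
  ring

lemma gg_hasDeriv {x : ℝ} (hx : 0 < x) : HasDerivAt gg (gg1 x) x := by
  have hD := expD_pos hx
  have hE := Real.hasDerivAt_exp x
  have hD' : HasDerivAt (fun x : ℝ => Real.exp x - 1) (Real.exp x) x := hE.sub_const 1
  have hnum : HasDerivAt (fun x : ℝ => x * Real.exp x) (1 * Real.exp x + x * Real.exp x) x :=
    (hasDerivAt_id x).mul hE
  have hD2 : HasDerivAt (fun x : ℝ => (Real.exp x - 1) ^ 2)
      (2 * (Real.exp x - 1) ^ 1 * Real.exp x) x := hD'.pow 2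
  have h1 : HasDerivAt (fun x : ℝ => x * Real.exp x / (Real.exp x - 1) ^ 2)
      (((1 * Real.exp x + x * Real.exp x) * (Real.exp x - 1) ^ 2
        - x * Real.exp x * (2 * (Real.exp x - 1) ^ 1 * Real.exp x)) / ((Real.exp x - 1) ^ 2) ^ 2)
      x := hnum.div hD2 (by positivity)
  have h2 : HasDerivAt (fun x : ℝ => 1 / (Real.exp x - 1))
      ((0 * (Real.exp x - 1) - 1 * Real.exp x) / (Real.exp x - 1) ^ 2) x :=
    (hasDerivAt_const x 1).div hD' (ne_of_gt hD)
  have h := h1.sub h2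
  refine h.congr_deriv ?_
  unfold gg1
  field_simp
  ring

lemma gg1_hasDeriv {x : ℝ} (hx : 0 < x) : HasDerivAt gg1 (gg2 x) x := by
  have hD := expD_pos hx
  have hE := Real.hasDerivAt_exp x
  have hnum : HasDerivAt
      (fun x : ℝ => Real.exp x * (2 * (Real.exp x - 1) - x * (Real.exp x + 1)))
      (Real.exp x * (2 * (Real.exp x - 1) - x * (Real.exp x + 1))
        + Real.exp x * (2 * Real.exp x - (1 * (Real.exp x + 1) + x * Real.exp x))) x := by
    have ha : HasDerivAt (fun x : ℝ => 2 * (Real.exp x - 1)) (2 * Real.exp x) x :=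
      (hE.sub_const 1).const_mul 2
    have hb : HasDerivAt (fun x : ℝ => x * (Real.exp x + 1))
        (1 * (Real.exp x + 1) + x * Real.exp x) x :=
      (hasDerivAt_id x).mul (hE.add_const 1)
    exact hE.mul (ha.sub hb)
  have hden : HasDerivAt (fun x : ℝ => (Real.exp x - 1) ^ 3)
      (3 * (Real.exp x - 1) ^ 2 * Real.exp x) x := (hE.sub_const 1).pow 3
  have h := hnum.div hden (by positivity)
  refine h.congr_deriv ?_
  unfold gg2
  field_simp
  ring

lemma gg_nonneg {x : ℝ} (hx : 0 < x) : 0 ≤ gg x := by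
  have hD := expD_pos hx
  have h1 := ineq1 x hx.le
  unfold gg
  rw [div_sub_div _ _ (by positivity) (ne_of_gt hD)]
  apply div_nonneg _ (by positivity)
  nlinarith [hD]

lemma gg2_nonneg {x : ℝ} (hx : 0 < x) : 0 ≤ gg2 x := by
  have hD := expD_pos hx
  have h4 := ineq4 x hx.le
  unfold gg2
  have hE : (0:ℝ) < Real.exp x := Real.exp_pos x
  positivity

lemma gg1_mono : MonotoneOn gg1 (Set.Ioi (0:ℝ)) := by
  apply monotoneOn_of_deriv_nonneg (convex_Ioi 0)
  · exact fun y hy => ((gg1_hasDeriv hy).continuousAt).continuousWithinAt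
  · intro y hy
    rw [interior_Ioi] at hy
    exact ((gg1_hasDeriv hy).differentiableAt).differentiableWithinAt
  · intro y hy
    rw [interior_Ioi] at hy
    rw [(gg1_hasDeriv hy).deriv]
    exact gg2_nonneg hy

/-- MVT upper: for 0 < a < b, gg b - gg a ≤ gg1 b * (b - a) -/
lemma mvt_le {a b : ℝ} (ha : 0 < a) (hab : a < b) : gg b - gg a ≤ gg1 b * (b - a) := by
  obtain ⟨c, hc, hceq⟩ := exists_hasDerivAt_eq_slope gg gg1 hab
    (fun y hy => ((gg_hasDeriv (lt_of_lt_of_le ha hy.1)).continuousAt).continuousWithinAt)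
    (fun y hy => gg_hasDeriv (ha.trans hy.1))
  have hgc : gg b - gg a = gg1 c * (b - a) := by
    rw [hceq]; field_simp [ne_of_gt (sub_pos.2 hab)]
  rw [hgc]
  have hcb : gg1 c ≤ gg1 b := gg1_mono (Set.mem_Ioi.2 (ha.trans hc.1))
    (Set.mem_Ioi.2 (ha.trans hab)) hc.2.le
  have : (0:ℝ) ≤ b - a := by linarith
  nlinarith

/-- MVT lower: for 0 < a < b, gg1 a * (b - a) ≤ gg b - gg a -/
lemma mvt_ge {a b : ℝ} (ha : 0 < a) (hab : a < b) : gg1 a * (b - a) ≤ gg b - gg a := by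
  obtain ⟨c, hc, hceq⟩ := exists_hasDerivAt_eq_slope gg gg1 hab
    (fun y hy => ((gg_hasDeriv (lt_of_lt_of_le ha hy.1)).continuousAt).continuousWithinAt)
    (fun y hy => gg_hasDeriv (ha.trans hy.1))
  have hgc : gg b - gg a = gg1 c * (b - a) := by
    rw [hceq]; field_simp [ne_of_gt (sub_pos.2 hab)]
  rw [hgc]
  have hcb : gg1 a ≤ gg1 c := gg1_mono (Set.mem_Ioi.2 ha)
    (Set.mem_Ioi.2 (ha.trans hc.1)) hc.1.le
  have : (0:ℝ) ≤ b - a := by linarith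
  nlinarith

/-- Midpoint inequality: for 0 < c < m, 2*c*gg m ≤ hh (m - c) - hh (m + c). -/
lemma midpoint_ineq {m c : ℝ} (hc : 0 < c) (hcm : c < m) :
    2 * c * gg m ≤ hh (m - c) - hh (m + c) := by
  set φ : ℝ → ℝ := fun t => hh (m - t) - hh (m + t) - 2 * t * gg m with hφ
  have hm : 0 < m := hc.trans hcm
  have hder : ∀ t ∈ Set.Icc (0:ℝ) c,
      HasDerivAt φ (gg (m - t) + gg (m + t) - 2 * gg m) t := by
    intro t ht
    obtain ⟨ht0, htc⟩ := ht
    have h1 : 0 < m - t := by linarith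
    have h2 : 0 < m + t := by linarith
    have ha : HasDerivAt (fun t : ℝ => hh (m - t)) (-(gg (m - t)) * (-1)) t :=
      (hh_hasDeriv h1).comp t ((hasDerivAt_id t).const_sub m)
    have hb : HasDerivAt (fun t : ℝ => hh (m + t)) (-(gg (m + t)) * 1) t :=
      (hh_hasDeriv h2).comp t ((hasDerivAt_id t).const_add m)
    have hcst : HasDerivAt (fun t : ℝ => 2 * t * gg m) (2 * gg m) t := by
      have : HasDerivAt (fun t : ℝ => t * (2 * gg m)) (2 * gg m) t := by
        simpa using (hasDerivAt_id t).mul_const (2 * gg m)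
      convert this using 2 with u; ring
    have h := (ha.sub hb).sub hcst
    exact h.congr_deriv (by ring)
  have hmono : MonotoneOn φ (Set.Icc 0 c) := by
    apply monotoneOn_of_deriv_nonneg (convex_Icc 0 c)
    · exact fun t ht => ((hder t ht).continuousAt).continuousWithinAt
    · intro t ht
      rw [interior_Icc] at ht
      exact ((hder t (Set.mem_Icc_of_Ioo ht)).differentiableAt).differentiableWithinAt
    · intro t ht
      rw [interior_Icc] at ht
      rw [(hder t (Set.mem_Icc_of_Ioo ht)).deriv]
      -- need gg (m - t) + gg (m + t) - 2 * gg m ≥ 0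
      have h1 : 0 < m - t := by cases ht with | intro a b => linarith
      have ht0 : 0 < t := ht.1
      have hA : gg m - gg (m - t) ≤ gg1 m * t := by
        have := mvt_le (a := m - t) (b := m) h1 (by linarith)
        calc gg m - gg (m - t) ≤ gg1 m * (m - (m - t)) := this
        _ = gg1 m * t := by ring
      have hB : gg1 m * t ≤ gg (m + t) - gg m := by
        have := mvt_ge (a := m) (b := m + t) hm (by linarith)
        calc gg1 m * t = gg1 m * (m + t - m) := by ring
        _ ≤ gg (m + t) - gg m := this
      linarith
  have h0 : φ 0 = 0 := by simp [hφ, hh]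
  have := hmono (Set.left_mem_Icc.2 hc.le) (Set.right_mem_Icc.2 hc.le) hc.le
  rw [h0] at this
  simp only [hφ] at this
  linarith

/-- Trapezoid inequality: for 0 < a, 0 < t,
    hh a - hh (a + t) ≤ t * (gg a + gg (a + t)) / 2. -/
lemma trapezoid_ineq {a t : ℝ} (ha : 0 < a) (ht : 0 < t) :
    hh a - hh (a + t) ≤ t * (gg a + gg (a + t)) / 2 := by
  set ψ : ℝ → ℝ := fun s => s * (gg a + gg (a + s)) / 2 - (hh a - hh (a + s)) with hψ
  have hder : ∀ s ∈ Set.Icc (0:ℝ) t,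
      HasDerivAt ψ ((gg a + gg (a + s)) / 2 + s * gg1 (a + s) / 2 - gg (a + s)) s := by
    intro s hs
    obtain ⟨hs0, hst⟩ := hs
    have h2 : 0 < a + s := by linarith
    have hgs : HasDerivAt (fun s : ℝ => gg (a + s)) (gg1 (a + s) * 1) s :=
      (gg_hasDeriv h2).comp s ((hasDerivAt_id s).const_add a)
    have hfirst : HasDerivAt (fun s : ℝ => s * (gg a + gg (a + s)) / 2)
        ((1 * (gg a + gg (a + s)) + s * (0 + gg1 (a + s) * 1)) / 2) s := by
      exact ((hasDerivAt_id s).mul ((hasDerivAt_const s (gg a)).add hgs)).div_const 2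
    have hsecond : HasDerivAt (fun s : ℝ => hh a - hh (a + s)) (-(-(gg (a + s)) * 1)) s := by
      exact (((hh_hasDeriv h2).comp s ((hasDerivAt_id s).const_add a))).const_sub (hh a)
    have h := hfirst.sub hsecond
    exact h.congr_deriv (by ring)
  have hmono : MonotoneOn ψ (Set.Icc 0 t) := by
    apply monotoneOn_of_deriv_nonneg (convex_Icc 0 t)
    · exact fun s hs => ((hder s hs).continuousAt).continuousWithinAt
    · intro s hs
      rw [interior_Icc] at hs
      exact ((hder s (Set.mem_Icc_of_Ioo hs)).differentiableAt).differentiableWithinAt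
    · intro s hs
      rw [interior_Icc] at hs
      rw [(hder s (Set.mem_Icc_of_Ioo hs)).deriv]
      have hs0 : 0 < s := hs.1
      have h2 : 0 < a + s := by linarith
      have hA : gg (a + s) - gg a ≤ gg1 (a + s) * s := by
        have := mvt_le (a := a) (b := a + s) ha (by linarith)
        calc gg (a + s) - gg a ≤ gg1 (a + s) * (a + s - a) := this
        _ = gg1 (a + s) * s := by ring
      linarith
  have h0 : ψ 0 = 0 := by simp [hψ]
  have := hmono (Set.left_mem_Icc.2 ht.le) (Set.right_mem_Icc.2 ht.le) ht.le
  rw [h0] at this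
  simp only [hψ] at this
  linarith


lemma hh_nonneg {x : ℝ} (hx : 0 < x) : 0 ≤ hh x :=
  div_nonneg hx.le (expD_pos hx).le

lemma hh_tendsto_zero : Tendsto hh atTop (nhds 0) := by
  have h1 : Tendsto (fun x : ℝ => x ^ 1 * Real.exp (-x)) atTop (nhds 0) :=
    Real.tendsto_pow_mul_exp_neg_atTop_nhds_zero 1
  have h2 : Tendsto (fun x : ℝ => Real.exp (-x)) atTop (nhds 0) :=
    Real.tendsto_exp_neg_atTop_nhds_zero
  have h3 : Tendsto (fun x : ℝ => x ^ 1 * Real.exp (-x) / (1 - Real.exp (-x)))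
      atTop (nhds (0 / (1 - 0))) := h1.div (tendsto_const_nhds.sub h2) (by norm_num)
  simp only [zero_div] at h3
  apply h3.congr'
  filter_upwards [eventually_gt_atTop (0:ℝ)] with x hx
  have hD := expD_pos hx
  have hE : Real.exp (-x) = (Real.exp x)⁻¹ := Real.exp_neg x
  unfold hh
  rw [hE, pow_one]
  have hEx : (0:ℝ) < Real.exp x := Real.exp_pos x
  field_simp


lemma sum_upper {L : ℝ} (hL : 0 < L) (hf : Summable (fun l : ℕ => gg ((l + 1 : ℕ) * L))) :
    L * ∑' l : ℕ, gg ((l + 1 : ℕ) * L) ≤ hh (L / 2) := by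
  rw [← tsum_mul_left]
  apply Summable.tsum_le_of_sum_range_le (hf.mul_left L)
  intro n
  have key : ∀ i : ℕ, L * gg ((i + 1 : ℕ) * L) ≤
      (fun i : ℕ => hh (L / 2 + i * L)) i - (fun i : ℕ => hh (L / 2 + i * L)) (i + 1) := by
    intro i
    have hm : (0:ℝ) < L / 2 := by linarith
    have hmi : L / 2 < ((i:ℝ) + 1) * L := by
      have hi : (0:ℝ) ≤ (i:ℝ) := Nat.cast_nonneg i
      nlinarith
    have h := midpoint_ineq hm hmi
    have e1 : ((i:ℝ) + 1) * L - L / 2 = L / 2 + i * L := by ring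
    have e2 : ((i:ℝ) + 1) * L + L / 2 = L / 2 + (i + 1 : ℕ) * L := by push_cast; ring
    rw [e1, e2] at h
    calc L * gg ((i + 1 : ℕ) * L) = 2 * (L / 2) * gg (((i:ℝ) + 1) * L) := by push_cast; ring_nf
    _ ≤ _ := by rw [show ((i:ℝ) + 1) * L = ((i + 1 : ℕ) : ℝ) * L by push_cast; ring] at h ⊢; exact h
  calc ∑ i ∈ Finset.range n, L * gg ((i + 1 : ℕ) * L)
      ≤ ∑ i ∈ Finset.range n, ((fun i : ℕ => hh (L / 2 + i * L)) i
          - (fun i : ℕ => hh (L / 2 + i * L)) (i + 1)) := Finset.sum_le_sum (fun i _ => key i)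
    _ = hh (L / 2 + (0:ℕ) * L) - hh (L / 2 + n * L) := by rw [Finset.sum_range_sub']
    _ ≤ hh (L / 2) := by
        have : 0 ≤ hh (L / 2 + n * L) := hh_nonneg (by positivity)
        simp only [Nat.cast_zero, zero_mul, add_zero]
        linarith


lemma sum_lower {L : ℝ} (hL : 0 < L) (hf : Summable (fun l : ℕ => gg ((l + 1 : ℕ) * L))) :
    hh L + L / 2 * gg L ≤ L * ∑' l : ℕ, gg ((l + 1 : ℕ) * L) := by
  set f : ℕ → ℝ := fun l => gg ((l + 1 : ℕ) * L) with hfdef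
  set T : ℝ := ∑' l : ℕ, f l with hT
  have hf1 : Summable (fun l : ℕ => f (l + 1)) := (summable_nat_add_iff 1).2 hf
  -- pointwise trapezoid bound
  have key : ∀ l : ℕ, (fun i : ℕ => hh ((i + 1 : ℕ) * L)) l
      - (fun i : ℕ => hh ((i + 1 : ℕ) * L)) (l + 1) ≤ L * (f l + f (l + 1)) / 2 := by
    intro l
    have ha : (0:ℝ) < ((l:ℝ) + 1) * L := by positivity
    have h := trapezoid_ineq ha hL
    have e1 : ((l:ℝ) + 1) * L + L = ((l + 1 + 1 : ℕ) : ℝ) * L := by push_cast; ring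
    rw [e1] at h
    simp only [hfdef]
    push_cast at h ⊢
    linarith [h]
  -- partial-sum inequality
  have hpart : ∀ n : ℕ, hh ((0 + 1 : ℕ) * L) - hh ((n + 1 : ℕ) * L)
      ≤ ∑ l ∈ Finset.range n, L * (f l + f (l + 1)) / 2 := by
    intro n
    calc hh ((0 + 1 : ℕ) * L) - hh ((n + 1 : ℕ) * L)
        = ∑ l ∈ Finset.range n, ((fun i : ℕ => hh ((i + 1 : ℕ) * L)) l
            - (fun i : ℕ => hh ((i + 1 : ℕ) * L)) (l + 1)) := by
          rw [Finset.sum_range_sub' (fun i : ℕ => hh ((i + 1 : ℕ) * L))]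
      _ ≤ _ := Finset.sum_le_sum (fun l _ => key l)
  -- limits
  have hsummand : Summable (fun l : ℕ => L * (f l + f (l + 1)) / 2) :=
    ((hf.add hf1).mul_left L).div_const 2
  have hRHS : Tendsto (fun n => ∑ l ∈ Finset.range n, L * (f l + f (l + 1)) / 2)
      atTop (nhds (L * (T + (T - f 0)) / 2)) := by
    have := hsummand.hasSum.tendsto_sum_nat
    have htv : ∑' l : ℕ, L * (f l + f (l + 1)) / 2 = L * (T + (T - f 0)) / 2 := by
      rw [tsum_div_const, tsum_mul_left, Summable.tsum_add hf hf1]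
      have h1 : ∑' l : ℕ, f (l + 1) = T - f 0 := by
        have := Summable.sum_add_tsum_nat_add (f := f) 1 hf
        simp only [Finset.range_one, Finset.sum_singleton] at this
        linarith [this]
      rw [h1]
    rwa [htv] at this
  have harg : Tendsto (fun n : ℕ => ((n + 1 : ℕ) : ℝ) * L) atTop atTop := by
    apply Tendsto.atTop_mul_const hL
    have h1 : Tendsto (fun n : ℕ => (n:ℝ)) atTop atTop := tendsto_natCast_atTop_atTop
    have h2 := h1.comp (tendsto_add_atTop_nat 1)
    simpa [Function.comp_def] using h2
  have hLHS : Tendsto (fun n : ℕ => hh ((0 + 1 : ℕ) * L) - hh ((n + 1 : ℕ) * L))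
      atTop (nhds (hh ((0 + 1 : ℕ) * L) - 0)) :=
    tendsto_const_nhds.sub (hh_tendsto_zero.comp harg)
  have hfinal := le_of_tendsto_of_tendsto' hLHS hRHS hpart
  have hf0 : f 0 = gg L := by simp [hfdef]
  rw [hf0] at hfinal
  norm_num at hfinal
  linarith


lemma Iio_subset_compl : Set.Iio (1:ℝ) ⊆ {(1:ℝ)}ᶜ := fun x hx => by
  simp only [Set.mem_compl_iff, Set.mem_singleton_iff]
  exact ne_of_lt hx

lemma mem_Ioo_event : Set.Ioo (0:ℝ) 1 ∈ nhdsWithin (1:ℝ) (Set.Iio 1) :=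
  Ioo_mem_nhdsLT_of_mem (by constructor <;> norm_num)

/-- (q-1)/log q → 1 as q → 1⁻ -/
lemma K0 : Tendsto (fun q : ℝ => (q - 1) / Real.log q)
    (nhdsWithin 1 (Set.Iio 1)) (nhds 1) := by
  have hlog : HasDerivAt Real.log 1 1 := by
    simpa using Real.hasDerivAt_log (one_ne_zero)
  have hslope : Tendsto (slope Real.log 1) (nhdsWithin 1 {(1:ℝ)}ᶜ) (nhds 1) :=
    hasDerivAt_iff_tendsto_slope.1 hlog
  have hinv : Tendsto (fun q => (slope Real.log 1 q)⁻¹)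
      (nhdsWithin 1 {(1:ℝ)}ᶜ) (nhds 1) := by
    have := hslope.inv₀ one_ne_zero
    simpa using this
  have hmono := hinv.mono_left (nhdsWithin_mono 1 Iio_subset_compl)
  apply hmono.congr
  intro q
  rw [slope_def_field, Real.log_one, inv_div]
  ring_nf

/-- 1/log(1/q) - 1/(1-q) → -1/2 as q → 1⁻ -/
lemma K1 : Tendsto (fun q : ℝ => 1 / Real.log (1 / q) - 1 / (1 - q))
    (nhdsWithin 1 (Set.Iio 1)) (nhds (-(1 / 2))) := by
  have hG1 : Tendsto (fun q : ℝ => ((1 - q) + Real.log q) / (1 - q) ^ 2)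
      (nhdsWithin 1 (Set.Iio 1)) (nhds (-(1/2))) := by
    have hb : Tendsto (fun q : ℝ => (1 - q) / q) (nhdsWithin 1 (Set.Iio 1)) (nhds 0) := by
      have hc : ContinuousAt (fun q : ℝ => (1 - q) / q) 1 := by
        apply ContinuousAt.div
        · exact continuous_const.sub continuous_id |>.continuousAt
        · exact continuous_id.continuousAt
        · norm_num
      have := hc.tendsto
      norm_num at this
      exact this.mono_left nhdsWithin_le_nhds
    have hsq : Tendsto (fun q : ℝ => ((1 - q) + Real.log q) / (1 - q) ^ 2 + 1/2)
        (nhdsWithin 1 (Set.Iio 1)) (nhds 0) := by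
      apply squeeze_zero_norm' _ hb
      filter_upwards [mem_Ioo_event] with q hq
      obtain ⟨hq0, hq1⟩ := hq
      have hx : |1 - q| < 1 := by rw [abs_of_pos (by linarith)]; linarith
      have key := Real.abs_log_sub_add_sum_range_le hx 2
      have hsum : (∑ i ∈ Finset.range 2, (1 - q) ^ (i + 1) / (i + 1)) =
          (1 - q) + (1 - q) ^ 2 / 2 := by
        simp [Finset.sum_range_succ]
        norm_num
      rw [hsum] at key
      have h1q : (0:ℝ) < 1 - q := by linarith
      have habs : |1 - q| = 1 - q := abs_of_pos h1q
      rw [habs] at key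
      norm_num at key
      -- key : |(1 - q) + (1 - q)^2/2 + log q| ≤ (1-q)^3 / q
      have h2 : ((1 - q) + Real.log q) / (1 - q) ^ 2 + 1/2
          = ((1 - q) + (1 - q) ^ 2 / 2 + Real.log q) / (1 - q) ^ 2 := by
        field_simp
        ring
      rw [Real.norm_eq_abs, h2, abs_div, abs_of_pos (by positivity : (0:ℝ) < (1 - q) ^ 2)]
      rw [div_le_div_iff₀ (by positivity) hq0]
      calc |1 - q + (1 - q) ^ 2 / 2 + Real.log q| * q
          ≤ ((1 - q) ^ 3 / q) * q := by
            apply mul_le_mul_of_nonneg_right key hq0.le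
        _ = (1 - q) * (1 - q) ^ 2 := by field_simp
    have h := hsq.sub_const (1/2)
    simp only [add_sub_cancel_right] at h
    convert h using 2
    norm_num
  have hprod := hG1.mul K0
  norm_num at hprod
  apply hprod.congr'
  filter_upwards [mem_Ioo_event] with q hq
  obtain ⟨hq0, hq1⟩ := hq
  have hlq : Real.log q ≠ 0 := ne_of_lt (Real.log_neg hq0 hq1)
  have h1q : (1:ℝ) - q ≠ 0 := by linarith [hq1]
  rw [one_div q, Real.log_inv]
  set u := Real.log q with hu
  clear_value u
  have hnu : -u ≠ 0 := neg_ne_zero.2 hlq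
  have hd1 : ((1:ℝ) - q) ^ 2 * u ≠ 0 := mul_ne_zero (pow_ne_zero 2 h1q) hlq
  have hd2 : -u * (1 - q) ≠ 0 := mul_ne_zero hnu h1q
  rw [div_mul_div_comm, div_sub_div 1 1 hnu h1q, div_eq_div_iff hd1 hd2]
  ring

/-- (sqrt(1/q) + 1 - 2q)/(2(1-q)) → 5/4 as q → 1⁻ -/
lemma K2 : Tendsto (fun q : ℝ => (Real.sqrt (1 / q) + 1 - 2 * q) / (2 * (1 - q)))
    (nhdsWithin 1 (Set.Iio 1)) (nhds (5 / 4)) := by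
  set F : ℝ → ℝ := fun q => Real.sqrt (1 / q) + 1 - 2 * q with hF
  have hd : HasDerivAt F (-(5/2) : ℝ) 1 := by
    have hinner : HasDerivAt (fun q : ℝ => 1 / q) (-1 : ℝ) 1 := by
      have := hasDerivAt_inv (one_ne_zero (α := ℝ))
      simp only [one_pow] at this
      simpa [one_div] using this
    have hsq : HasDerivAt (fun q : ℝ => Real.sqrt (1 / q)) ((-1) / (2 * Real.sqrt (1/1))) 1 :=
      hinner.sqrt (by norm_num)
    have h2 : HasDerivAt (fun q : ℝ => 2 * q) (2 : ℝ) 1 := by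
      simpa using (hasDerivAt_id (1:ℝ)).const_mul 2
    have := (hsq.add_const 1).sub h2
    exact this.congr_deriv (by norm_num)
  have hslope : Tendsto (slope F 1) (nhdsWithin 1 {(1:ℝ)}ᶜ) (nhds (-(5/2))) :=
    hasDerivAt_iff_tendsto_slope.1 hd
  have hF1 : F 1 = 0 := by simp [hF]; norm_num
  have hmul := hslope.const_mul (-(1/2) : ℝ)
  have hval : (-(1/2) : ℝ) * (-(5/2)) = 5/4 := by norm_num
  rw [hval] at hmul
  have hmono := hmul.mono_left (nhdsWithin_mono 1 Iio_subset_compl)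
  apply hmono.congr'
  filter_upwards [self_mem_nhdsWithin] with q hq
  have hq1 : q ≠ 1 := ne_of_lt hq
  rw [slope_def_field, hF1, sub_zero]
  rw [show Real.sqrt (1/q) + 1 - 2*q = F q by rw [hF]]
  set y := F q with hy
  clear_value y
  have hq1' : q - 1 ≠ 0 := sub_ne_zero.2 hq1
  have hq1'' : (2:ℝ) * (1 - q) ≠ 0 := by
    intro h; apply hq1'; linarith [h]
  field_simp
  ring



set_option maxHeartbeats 1000000 in
theorem limit_A_q_one_quarter
    (A : ℝ → ℝ)
    (hA : ∀ q : ℝ, 0 < q → q < 1 → A q =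
      -((1 - q) / (q * Real.log (1 / q))) * (∑' l : ℕ, 1 / ((1 / q) ^ (l + 1) - 1))
        + ((1 - q) / q) * (∑' l : ℕ, (l + 1 : ℝ) * (1 / q) ^ (l + 1) / ((1 / q) ^ (l + 1) - 1) ^ 2)
        + 1 / Real.log (1 / q) - 1 / (1 - q) - q / (1 - q)) :
    Tendsto A (nhdsWithin 1 (Set.Iio 1)) (nhds (1 / 4)) := by
  set W : ℝ → ℝ := fun q => 3 / 2 * (1 / Real.log (1 / q) - 1 / (1 - q)) + 1 with hWdef
  set U : ℝ → ℝ := fun q =>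
      (Real.sqrt (1 / q) + 3) / 2 * (1 / Real.log (1 / q) - 1 / (1 - q))
        + (Real.sqrt (1 / q) + 1 - 2 * q) / (2 * (1 - q)) with hUdef
  have hWlim : Tendsto W (nhdsWithin 1 (Set.Iio 1)) (nhds (1 / 4)) := by
    have h := (K1.const_mul (3 / 2 : ℝ)).add_const 1
    have : (3 / 2 : ℝ) * (-(1 / 2)) + 1 = 1 / 4 := by norm_num
    rw [this] at h
    exact h
  have hsqrt3 : Tendsto (fun q : ℝ => (Real.sqrt (1 / q) + 3) / 2)
      (nhdsWithin 1 (Set.Iio 1)) (nhds 2) := by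
    have hc : ContinuousAt (fun q : ℝ => (Real.sqrt (1 / q) + 3) / 2) 1 := by
      apply ContinuousAt.div_const
      apply ContinuousAt.add _ continuousAt_const
      exact Real.continuous_sqrt.continuousAt.comp
        ((continuousAt_const.div continuousAt_id (by norm_num)))
    have hval : ((Real.sqrt (1/1) + 3)/2 : ℝ) = 2 := by
      rw [show (1:ℝ)/1 = 1 by norm_num, Real.sqrt_one]; norm_num
    exact (hval ▸ hc.tendsto).mono_left nhdsWithin_le_nhds
  have hUlim : Tendsto U (nhdsWithin 1 (Set.Iio 1)) (nhds (1 / 4)) := by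
    have h := (hsqrt3.mul K1).add K2
    have : (2 : ℝ) * (-(1 / 2)) + 5 / 4 = 1 / 4 := by norm_num
    rw [this] at h
    exact h
  have hbound : ∀ q : ℝ, 0 < q → q < 1 → W q ≤ A q ∧ A q ≤ U q := by
    intro q hq0 hq1
    have h1q : (0:ℝ) < 1 - q := by linarith
    set L : ℝ := Real.log (1 / q) with hLdef
    have hinv1 : (1:ℝ) < 1 / q := (one_lt_div hq0).2 hq1
    have hL : 0 < L := Real.log_pos hinv1
    have hexp : Real.exp L = 1 / q := Real.exp_log (by positivity)
    have hP : ∀ l : ℕ, ((1 / q : ℝ)) ^ (l + 1) = Real.exp (((l + 1 : ℕ) : ℝ) * L) := by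
      intro l
      rw [Real.exp_nat_mul, hexp]
    have hPgt : ∀ l : ℕ, (1:ℝ) < (1 / q) ^ (l + 1) := by
      intro l
      exact one_lt_pow₀ hinv1 (Nat.succ_ne_zero l)
    have hPden : ∀ l : ℕ, (0:ℝ) < (1 / q) ^ (l + 1) - 1 := fun l => by linarith [hPgt l]
    have hPq : ∀ l : ℕ, ((1 / q : ℝ)) ^ (l + 1) * q ^ (l + 1) = 1 := by
      intro l
      rw [← mul_pow]
      rw [one_div_mul_cancel (ne_of_gt hq0)]
      exact one_pow _
    have hPlow : ∀ l : ℕ, (1 - q) * (1 / q) ^ (l + 1) ≤ (1 / q) ^ (l + 1) - 1 := by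
      intro l
      have h1 : (1:ℝ) ≤ (1 / q) ^ l := one_le_pow₀ hinv1.le
      have h2 : q * (1 / q) ^ (l + 1) = (1 / q) ^ l := by
        rw [pow_succ]
        field_simp
      nlinarith [h2, h1]
    -- summability of b
    have hb_sum : Summable (fun l : ℕ => 1 / ((1 / q : ℝ) ^ (l + 1) - 1)) := by
      apply Summable.of_nonneg_of_le
        (f := fun l : ℕ => (q / (1 - q)) * q ^ l)
        (fun l => le_of_lt (one_div_pos.2 (hPden l)))
      · intro l
        have hle := hPlow l
        have hpos : (0:ℝ) < (1 - q) * (1 / q) ^ (l + 1) := by positivity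
        refine (one_div_le_one_div_of_le hpos hle).trans_eq ?_
        rw [show ((1:ℝ)/q)^(l+1) = (q^(l+1))⁻¹ by rw [one_div, inv_pow]]
        rw [pow_succ]
        field_simp
      · exact (summable_geometric_of_lt_one hq0.le hq1).mul_left _
    -- summability of a
    have ha_sum : Summable
        (fun l : ℕ => (l + 1 : ℝ) * (1 / q) ^ (l + 1) / ((1 / q) ^ (l + 1) - 1) ^ 2) := by
      apply Summable.of_nonneg_of_le
        (f := fun l : ℕ => (q / (1 - q) ^ 2) * ((l : ℝ) ^ 1 * q ^ l + q ^ l))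
        (fun l => by positivity)
      · intro l
        have hle := hPlow l
        have hpos2 : (0:ℝ) < ((1 - q) * (1 / q) ^ (l + 1)) ^ 2 := by positivity
        have hsq : ((1 - q) * (1 / q) ^ (l + 1)) ^ 2 ≤ ((1 / q) ^ (l + 1) - 1) ^ 2 :=
          pow_le_pow_left₀ (by positivity) hle 2
        have hstep : (l + 1 : ℝ) * (1 / q) ^ (l + 1) / ((1 / q) ^ (l + 1) - 1) ^ 2
            ≤ (l + 1 : ℝ) * (1 / q) ^ (l + 1) / ((1 - q) * (1 / q) ^ (l + 1)) ^ 2 :=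
          div_le_div_of_nonneg_left (by positivity) hpos2 hsq
        refine hstep.trans_eq ?_
        rw [show ((1:ℝ)/q)^(l+1) = (q^(l+1))⁻¹ by rw [one_div, inv_pow]]
        rw [pow_succ]
        field_simp
      · apply Summable.mul_left
        exact (summable_pow_mul_geometric_of_norm_lt_one 1
          (by rw [Real.norm_eq_abs, abs_of_pos hq0]; exact hq1)).add
          (summable_geometric_of_lt_one hq0.le hq1)
    -- gg identity
    have hfa : ∀ l : ℕ, gg (((l + 1 : ℕ) : ℝ) * L)
        = L * ((l + 1 : ℝ) * (1 / q) ^ (l + 1) / ((1 / q) ^ (l + 1) - 1) ^ 2)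
          - 1 / ((1 / q) ^ (l + 1) - 1) := by
      intro l
      unfold gg
      rw [show Real.exp (((l + 1 : ℕ) : ℝ) * L) = (1 / q) ^ (l + 1) from (hP l).symm]
      have hd := hPden l
      push_cast
      field_simp
    have hf_sum : Summable (fun l : ℕ => gg (((l + 1 : ℕ) : ℝ) * L)) := by
      apply Summable.congr ((ha_sum.mul_left L).sub hb_sum)
      intro l
      exact (hfa l).symm
    obtain ⟨Sb, hSb⟩ : ∃ x : ℝ, (∑' l : ℕ, 1 / ((1 / q : ℝ) ^ (l + 1) - 1)) = x := ⟨_, rfl⟩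
    obtain ⟨Sa, hSa⟩ : ∃ x : ℝ,
        (∑' l : ℕ, (l + 1 : ℝ) * (1 / q) ^ (l + 1) / ((1 / q) ^ (l + 1) - 1) ^ 2) = x := ⟨_, rfl⟩
    obtain ⟨T, hTd⟩ : ∃ x : ℝ, (∑' l : ℕ, gg (((l + 1 : ℕ) : ℝ) * L)) = x := ⟨_, rfl⟩
    have hT : T = L * Sa - Sb := by
      rw [← hTd, ← hSa, ← hSb, tsum_congr hfa,
        Summable.tsum_sub (ha_sum.mul_left L) hb_sum, tsum_mul_left]
    have hAq : A q = (1 - q) / (q * L) * T + 1 / L - 1 / (1 - q) - q / (1 - q) := by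
      rw [hA q hq0 hq1, hSa, hSb, hT, ← hLdef]
      have hLne := ne_of_gt hL
      field_simp
      ring
    have hTub : L * T ≤ hh (L / 2) := hTd ▸ sum_upper hL hf_sum
    have hTlb : hh L + L / 2 * gg L ≤ L * T := hTd ▸ sum_lower hL hf_sum
    have hc : (0:ℝ) ≤ (1 - q) / (q * L) := by positivity
    -- sqrt facts
    set s : ℝ := Real.sqrt (1 / q) with hsdef
    have hs2 : s * s = 1 / q := Real.mul_self_sqrt (by positivity)
    have hsexp : Real.exp (L / 2) = s := by
      have he : Real.exp (L / 2) * Real.exp (L / 2) = 1 / q := by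
        rw [← Real.exp_add]
        rw [show L / 2 + L / 2 = L by ring, hexp]
      rw [hsdef, ← he, Real.sqrt_mul_self (Real.exp_pos _).le]
    have hs1 : 1 < s := by nlinarith [Real.sqrt_nonneg (1 / q), hs2, hinv1]
    have hqs : q * (s * s) = 1 := by
      rw [hs2]; field_simp
    constructor
    · -- lower bound
      have hTge : (hh L + L / 2 * gg L) / L ≤ T := by
        rw [div_le_iff₀ hL]
        linarith [hTlb]
      have hmul := mul_le_mul_of_nonneg_left hTge hc
      have hident : (1 - q) / (q * L) * ((hh L + L / 2 * gg L) / L)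
          + 1 / L - 1 / (1 - q) - q / (1 - q) = W q := by
        simp only [hWdef]
        unfold hh gg
        rw [hexp]
        rw [← hLdef]
        have hd : (0:ℝ) < 1 / q - 1 := by linarith [hinv1]
        field_simp
        ring
      rw [hAq]
      rw [← hident]
      linarith [hmul]
    · -- upper bound
      have hTle : T ≤ hh (L / 2) / L := by
        rw [le_div_iff₀ hL]
        linarith [hTub]
      have hmul := mul_le_mul_of_nonneg_left hTle hc
      have hident : (1 - q) / (q * L) * (hh (L / 2) / L)
          + 1 / L - 1 / (1 - q) - q / (1 - q) = U q := by
        simp only [hUdef]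
        unfold hh
        rw [hsexp, ← hLdef]
        have hs1' : s - 1 ≠ 0 := by linarith [hs1]
        have step1 : (1 - q) / (q * L) * (L / 2 / (s - 1) / L) = (s + 1) / (2 * L) := by
          rw [show (1:ℝ) - q = q * (s * s) - q by rw [hqs]]
          field_simp
          ring
        rw [step1, ← hsdef]
        field_simp
        ring
      rw [hAq]
      rw [← hident]
      linarith [hmul]
  -- squeeze
  apply tendsto_of_tendsto_of_tendsto_of_le_of_le' hWlim hUlim
  · filter_upwards [mem_Ioo_event] with q hq
    exact (hbound q hq.1 hq.2).1
  · filter_upwards [mem_Ioo_event] with q hq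
    exact (hbound q hq.1 hq.2).2
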